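/- For every r > 0 the identity −(1/2)·d/dr( Υ(r)·V₂(r) ) − (4Υ(r)/r⁵)·(r² − 4Mr + 3Q²) = (3/r⁷)·( 3Mr³ − (8M² + 4Q²)r² + 15MQ²r − 6Q⁴ ) holds, and this quantity is strictly positive for every r ≥ r_P. -/

import Mathlib

noncomputable section

/-- The Reissner–Nordström lapse function `Υ(r) = 1 - 2M/r + Q²/r²`. -/
def Upsilon (M Q r : ℝ) : ℝ := 1 - 2*M/r + Q^2/r^2

/-- The photon-sphere radius `r_P = (3M + √(9M² - 8Q²))/2`. -/
def rP (M Q : ℝ) : ℝ := (3*M + Real.sqrt (9*M^2 - 8*Q^2)) / 2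

/-- The Regge–Wheeler potential `V₂(r) = r⁻²(4 - 2M/r - 2Q²/r²)`. -/
def V2 (M Q r : ℝ) : ℝ := (1 / r^2) * (4 - 2*M/r - 2*Q^2/r^2)

theorem A2_identity_and_pos (M Q : ℝ) (hM : 0 < M) (hQ : |Q| < M) :
    (∀ r : ℝ, 0 < r →
      -(1/2) * deriv (fun s => Upsilon M Q s * V2 M Q s) r
        - (4 * Upsilon M Q r / r^5) * (r^2 - 4*M*r + 3*Q^2)
        = (3 / r^7) * (3*M*r^3 - (8*M^2 + 4*Q^2)*r^2 + 15*M*Q^2*r - 6*Q^4)) ∧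
    (∀ r : ℝ, rP M Q ≤ r →
      0 < (3 / r^7) * (3*M*r^3 - (8*M^2 + 4*Q^2)*r^2 + 15*M*Q^2*r - 6*Q^4)) := by
  constructor
  · intro r hr
    have hr0 : r ≠ 0 := ne_of_gt hr
    have hU : HasDerivAt (fun s : ℝ => Upsilon M Q s) (2*M/r^2 - 2*Q^2/r^3) r := by
      have h1 : HasDerivAt (fun s : ℝ => 2*M/s) ((0 * r - 2*M*1)/r^2) r :=
        (hasDerivAt_const r (2*M)).div (hasDerivAt_id r) hr0
      have h2 : HasDerivAt (fun s : ℝ => Q^2/s^2)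
          ((0 * r^2 - Q^2 * (2 * r^(2-1)))/(r^2)^2) r :=
        (hasDerivAt_const r (Q^2)).div (hasDerivAt_pow 2 r) (pow_ne_zero 2 hr0)
      have h := ((hasDerivAt_const r (1:ℝ)).sub h1).add h2
      refine h.congr_deriv ?_
      field_simp
      ring
    have hV : HasDerivAt (fun s : ℝ => V2 M Q s)
        (-2/r^3 * (4 - 2*M/r - 2*Q^2/r^2) + (1/r^2) * (2*M/r^2 + 4*Q^2/r^3)) r := by
      have h0 : HasDerivAt (fun s : ℝ => 1/s^2)
          ((0 * r^2 - 1 * (2 * r^(2-1)))/(r^2)^2) r :=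
        (hasDerivAt_const r (1:ℝ)).div (hasDerivAt_pow 2 r) (pow_ne_zero 2 hr0)
      have h1 : HasDerivAt (fun s : ℝ => 2*M/s) ((0 * r - 2*M*1)/r^2) r :=
        (hasDerivAt_const r (2*M)).div (hasDerivAt_id r) hr0
      have h2 : HasDerivAt (fun s : ℝ => 2*Q^2/s^2)
          ((0 * r^2 - 2*Q^2 * (2 * r^(2-1)))/(r^2)^2) r :=
        (hasDerivAt_const r (2*Q^2)).div (hasDerivAt_pow 2 r) (pow_ne_zero 2 hr0)
      have h := h0.mul (((hasDerivAt_const r (4:ℝ)).sub h1).sub h2)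
      refine h.congr_deriv ?_
      simp only [Pi.sub_apply]
      field_simp
      ring
    have hUV := hU.mul hV
    rw [show (fun s => Upsilon M Q s * V2 M Q s) = (fun s => Upsilon M Q s) * (fun s => V2 M Q s) from rfl,
      hUV.deriv]
    unfold Upsilon V2
    field_simp
    ring
  · intro r hrp
    have hq : Q^2 < M^2 := by nlinarith [abs_nonneg Q, sq_abs Q, abs_lt.mp hQ]
    have hQ2 : 0 ≤ Q^2 := sq_nonneg Q
    have hD : 0 ≤ 9*M^2 - 8*Q^2 := by nlinarith
    have hsq : Real.sqrt (9*M^2 - 8*Q^2) ^ 2 = 9*M^2 - 8*Q^2 := Real.sq_sqrt hD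
    have hsM : M ≤ Real.sqrt (9*M^2 - 8*Q^2) := by
      rw [show (9*M^2 - 8*Q^2) = M^2 + (8*M^2 - 8*Q^2) by ring]
      nlinarith [Real.sqrt_le_sqrt (show M^2 ≤ M^2 + (8*M^2 - 8*Q^2) by nlinarith),
        Real.sqrt_sq hM.le]
    have hrP2M : 2*M ≤ rP M Q := by
      unfold rP; linarith
    have hr0 : 0 < r := by nlinarith
    have hs0 : 0 ≤ Real.sqrt (9*M^2 - 8*Q^2) := Real.sqrt_nonneg _
    have hfac1 : 0 ≤ r - rP M Q := by linarith
    have hfac2 : 0 ≤ r - (3*M - rP M Q) := by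
      have : 3*M ≤ 2 * rP M Q := by unfold rP at *; linarith
      linarith
    have hrPsq : (rP M Q)^2 = 3*M*(rP M Q) - 2*Q^2 := by
      unfold rP; nlinarith [hsq]
    have hquad : 0 ≤ r^2 - 3*M*r + 2*Q^2 := by
      nlinarith [mul_nonneg hfac1 hfac2]
    have hr2M : 2*M ≤ r := le_trans hrP2M hrp
    have hP : 0 < 3*M*r^3 - (8*M^2 + 4*Q^2)*r^2 + 15*M*Q^2*r - 6*Q^4 := by
      have key : 3*M*r^3 - (8*M^2 + 4*Q^2)*r^2 + 15*M*Q^2*r - 6*Q^4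
          = (r^2 - 3*M*r + 2*Q^2)*(3*M*r + M^2 - 4*Q^2)
            + (M^2 - Q^2)*(3*M*r - 2*Q^2) := by ring
      rw [key]
      have hMr : M*(2*M) ≤ M*r := mul_le_mul_of_nonneg_left hr2M (le_of_lt hM)
      have ha : 0 ≤ (r^2 - 3*M*r + 2*Q^2)*(3*M*r + M^2 - 4*Q^2) :=
        mul_nonneg hquad (by nlinarith)
      have hb : 0 < (M^2 - Q^2)*(3*M*r - 2*Q^2) :=
        mul_pos (by linarith) (by nlinarith)
      linarith
    have : (0:ℝ) < 3 / r^7 := by positivity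
    exact mul_pos this hP
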